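/- arXiv:2210.03169 — 3 statements merged into one kernel-verified Lean document; each statement's English description precedes it below -/
import Mathlib

section
/- Let L be a finite lattice, R a commutative ring, and τ : L → R a function such that each τ(F) is nilpotent and τ(F)·τ(G) = 0 whenever F and G are incomparable in L. Then for all F, G ∈ L: ( ∏_{F ≤ H < F∨G} (1 - τ(H))^{-1} − 1 ) · ( ∏_{G ≤ J < F∨G} (1 - τ(J))^{-1} − 1 ) = 0, where the products run over H with F ≤ H and H < F∨G, respectively J with G ≤ J and J < F∨G. -/
open Finset in
lemma prod_one_add_sub_one_mem_span {ι R : Type*} [CommRing R] (s : Finset ι) (f : ι → R) :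
    (∏ i ∈ s, (1 + f i)) - 1 ∈ Ideal.span (f '' ↑s) := by
  classical
  induction s using Finset.induction_on with
  | empty => simp
  | @insert a s ha ih =>
    rw [Finset.prod_insert ha]
    have key : (1 + f a) * (∏ i ∈ s, (1 + f i)) - 1
        = ((∏ i ∈ s, (1 + f i)) - 1) + f a * (∏ i ∈ s, (1 + f i)) := by ring
    rw [key]
    refine Ideal.add_mem _ (Ideal.span_mono ?_ ih) (Ideal.mul_mem_right _ _ (Ideal.subset_span ?_))
    · exact Set.image_mono (by simp)
    · exact ⟨a, by simp, rfl⟩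

open Finset in
/-- Let `L` be a finite lattice, `R` a commutative ring, and `τ : L → R` with each `τ F`
nilpotent and `τ F * τ G = 0` whenever `F` and `G` are incomparable.  Then for all
`F G : L`,
`(∏_{F ≤ H < F⊔G} (1 - τ H)⁻¹ − 1) * (∏_{G ≤ J < F⊔G} (1 - τ J)⁻¹ − 1) = 0`. -/
theorem incomparable_interval_products {L R : Type*} [Lattice L] [Fintype L]
    [DecidableRel ((· ≤ ·) : L → L → Prop)] [DecidableRel ((· < ·) : L → L → Prop)]
    [CommRing R] (τ : L → R) (hnil : ∀ F, IsNilpotent (τ F))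
    (hinc : ∀ F G : L, ¬F ≤ G → ¬G ≤ F → τ F * τ G = 0) (F G : L) :
    ((∏ H ∈ univ.filter fun H => F ≤ H ∧ H < F ⊔ G, Ring.inverse (1 - τ H)) - 1) *
      ((∏ J ∈ univ.filter fun J => G ≤ J ∧ J < F ⊔ G, Ring.inverse (1 - τ J)) - 1) = 0 := by
  classical
  set f : L → R := fun H => τ H * Ring.inverse (1 - τ H) with hf
  have hu : ∀ H, IsUnit (1 - τ H) := fun H => (hnil H).isUnit_one_sub
  have hinv : ∀ H : L, Ring.inverse (1 - τ H) = 1 + f H := by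
    intro H
    have h1 : (1 - τ H) * Ring.inverse (1 - τ H) = 1 := Ring.mul_inverse_cancel _ (hu H)
    simp only [hf]
    linear_combination h1
  simp_rw [hinv]
  set s₁ := univ.filter fun H => F ≤ H ∧ H < F ⊔ G
  set s₂ := univ.filter fun J => G ≤ J ∧ J < F ⊔ G
  have hx := prod_one_add_sub_one_mem_span s₁ f
  have hy := prod_one_add_sub_one_mem_span s₂ f
  have hmul := Ideal.mul_mem_mul hx hy
  rw [Ideal.span_mul_span] at hmul
  have hbot : Ideal.span (⋃ s ∈ f '' ↑s₁, ⋃ t ∈ f '' ↑s₂, {s * t}) ≤ ⊥ := by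
    rw [Ideal.span_le]
    intro z hz
    simp only [Set.mem_iUnion, Set.mem_singleton_iff, Set.mem_image] at hz
    obtain ⟨a, ⟨H, hH, rfl⟩, b, ⟨J, hJ, rfl⟩, rfl⟩ := hz
    simp only [s₁, s₂, coe_filter, Set.mem_setOf_eq, mem_univ, true_and] at hH hJ
    have hHJ : ¬ H ≤ J := fun h => absurd (sup_le (le_trans hH.1 h) hJ.1) (not_le_of_gt hJ.2)
    have hJH : ¬ J ≤ H := fun h => absurd (sup_le hH.1 (le_trans hJ.1 h)) (not_le_of_gt hH.2)
    have h0 : τ H * τ J = 0 := hinc H J hHJ hJH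
    simp only [hf, SetLike.mem_coe, Ideal.mem_bot]
    calc τ H * Ring.inverse (1 - τ H) * (τ J * Ring.inverse (1 - τ J))
        = τ H * τ J * (Ring.inverse (1 - τ H) * Ring.inverse (1 - τ J)) := by ring
      _ = 0 := by rw [h0, zero_mul]
  exact Ideal.mem_bot.mp (hbot (by rwa [← Set.image2_mul, Set.image2_eq_iUnion] at hmul))
end

section
/- Let M be a loopless matroid on ground set E with lattice of flats L, and let T = ℤ[x_F : F ∈ L] ⊗ ℤ[y_e : e ∈ E]. Let I_2 be the ideal generated by y_e − Σ_{F ∌ e} x_F for e ∈ E, and I_4^aug the ideal generated by y_e x_F for all pairs with e ∉ F. Then I_2 + I_4^aug = I_2 + ⟨y_e^2 : e ∈ E⟩ + ⟨w_{e,F} : e ∈ E, F ∈ L, F ≠ ∅⟩, where w_{e,F} := Σ_{G ∈ L, F ⊆ G, e ∉ G} y_e x_G. -/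
open MvPolynomial Finset

attribute [local instance 9999] Classical.propDecidable

variable {α : Type*} [Finite α]

namespace I2I4Aux

variable (M : Matroid α)

private noncomputable abbrev XL (F : {F : Set α // M.IsFlat F}) :
    MvPolynomial ({F : Set α // M.IsFlat F} ⊕ α) ℤ := X (Sum.inl F)

private noncomputable abbrev Y (e : α) :
    MvPolynomial ({F : Set α // M.IsFlat F} ⊕ α) ℤ := X (Sum.inr e)

private lemma sum_flats_eq [Fintype {F : Set α // M.IsFlat F}] (P : Set α → Prop)
    (g : {F : Set α // M.IsFlat F} → MvPolynomial ({F : Set α // M.IsFlat F} ⊕ α) ℤ) :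
    (∑ᶠ G : {G : Set α // M.IsFlat G ∧ P G}, g ⟨G.1, G.2.1⟩) =
      ∑ G ∈ Finset.univ.filter (fun G : {F : Set α // M.IsFlat F} => P G.1), g G := by
  haveI := Fintype.ofFinite {G : Set α // M.IsFlat G ∧ P G}
  rw [finsum_eq_sum_of_fintype]
  refine Finset.sum_bij (fun (G : {G : Set α // M.IsFlat G ∧ P G}) _ => (⟨G.1, G.2.1⟩ :
      {F : Set α // M.IsFlat F})) (fun a _ => ?_) (fun a _ b _ h => ?_) (fun b hb => ?_)
      (fun a _ => rfl)
  · simp [a.2.2]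
  · exact Subtype.ext (congrArg Subtype.val h :)
  · simp only [mem_filter, mem_univ, true_and] at hb
    exact ⟨⟨b.1, b.2, hb⟩, Finset.mem_univ _, rfl⟩

end I2I4Aux

namespace I2I4Aux

variable (M : Matroid α)

private noncomputable def I2 : Ideal (MvPolynomial ({F : Set α // M.IsFlat F} ⊕ α) ℤ) :=
  Ideal.span {p | ∃ e : α, p = X (Sum.inr e) -
    ∑ᶠ F : {F : Set α // M.IsFlat F ∧ e ∉ F}, X (Sum.inl ⟨F.1, F.2.1⟩)}

private noncomputable def I4 : Ideal (MvPolynomial ({F : Set α // M.IsFlat F} ⊕ α) ℤ) :=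
  Ideal.span {p | ∃ (e : α) (F : {F : Set α // M.IsFlat F}),
    e ∉ F.1 ∧ p = X (Sum.inr e) * X (Sum.inl F)}

private noncomputable def Isq : Ideal (MvPolynomial ({F : Set α // M.IsFlat F} ⊕ α) ℤ) :=
  Ideal.span {p | ∃ e : α, p = X (Sum.inr e) ^ 2}

private noncomputable def IW : Ideal (MvPolynomial ({F : Set α // M.IsFlat F} ⊕ α) ℤ) :=
  Ideal.span {p | ∃ (e : α) (F : {F : Set α // M.IsFlat F}), F.1 ≠ ∅ ∧
    p = ∑ᶠ G : {G : Set α // M.IsFlat G ∧ F.1 ⊆ G ∧ e ∉ G},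
      X (Sum.inr e) * X (Sum.inl ⟨G.1, G.2.1⟩)}

private lemma gen2_mem [Fintype {F : Set α // M.IsFlat F}] (e : α) :
    (Y M e - ∑ G ∈ Finset.univ.filter (fun G : {F : Set α // M.IsFlat F} => e ∉ G.1), XL M G)
      ∈ I2 M := by
  have h : (X (Sum.inr e) -
      ∑ᶠ F : {F : Set α // M.IsFlat F ∧ e ∉ F}, X (Sum.inl ⟨F.1, F.2.1⟩)) ∈ I2 M :=
    Ideal.subset_span ⟨e, rfl⟩
  rw [sum_flats_eq M (fun F => e ∉ F) (fun G => X (Sum.inl G))] at h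
  simpa only [Finset.filter_congr_decidable] using h

private lemma step [Fintype {F : Set α // M.IsFlat F}] (e : α) (F : {F : Set α // M.IsFlat F})
    (he : e ∉ F.1)
    (IH : ∀ G : {F : Set α // M.IsFlat F}, F.1 ⊂ G.1 → e ∉ G.1 →
      Y M e * XL M G ∈ I2 M + Isq M + IW M) :
    Y M e * XL M F ∈ I2 M + Isq M + IW M := by
  have hsplit : (univ.filter fun G : {F : Set α // M.IsFlat F} => F.1 ⊆ G.1 ∧ e ∉ G.1)
      = insert F (univ.filter fun G : {F : Set α // M.IsFlat F} => F.1 ⊂ G.1 ∧ e ∉ G.1) := by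
    ext G
    simp only [mem_filter, mem_insert, mem_univ, true_and]
    constructor
    · rintro ⟨hsub, hG⟩
      rcases eq_or_ne G F with rfl | hne
      · exact Or.inl rfl
      · exact Or.inr ⟨hsub.ssubset_of_ne (fun h => hne (Subtype.ext h.symm)), hG⟩
    · rintro (rfl | ⟨hss, hG⟩)
      · exact ⟨subset_rfl, he⟩
      · exact ⟨hss.subset, hG⟩
  have hFnot : F ∉ (univ.filter fun G : {F : Set α // M.IsFlat F} => F.1 ⊂ G.1 ∧ e ∉ G.1) := by
    simp [ssubset_irrefl]
  have hS : (∑ G ∈ univ.filter (fun G : {F : Set α // M.IsFlat F} => F.1 ⊆ G.1 ∧ e ∉ G.1),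
      Y M e * XL M G) ∈ I2 M + Isq M + IW M := by
    rcases eq_or_ne F.1 (∅ : Set α) with hF | hF
    · have hfe : (univ.filter fun G : {F : Set α // M.IsFlat F} => F.1 ⊆ G.1 ∧ e ∉ G.1)
          = univ.filter fun G : {F : Set α // M.IsFlat F} => e ∉ G.1 := by
        ext G; simp [hF]
      rw [hfe]
      have hsum : ∑ G ∈ univ.filter (fun G : {F : Set α // M.IsFlat F} => e ∉ G.1),
            Y M e * XL M G
          = Y M e ^ 2 - Y M e * (Y M e -
              ∑ G ∈ univ.filter (fun G : {F : Set α // M.IsFlat F} => e ∉ G.1), XL M G) := by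
        rw [mul_sub, Finset.mul_sum]; ring
      rw [hsum]
      refine sub_mem ?_ ?_
      · exact Submodule.mem_sup_left (Submodule.mem_sup_right (Ideal.subset_span ⟨e, rfl⟩))
      · exact Submodule.mem_sup_left (Submodule.mem_sup_left
          (Ideal.mul_mem_left _ _ (gen2_mem M e)))
    · have hw : (∑ᶠ G : {G : Set α // M.IsFlat G ∧ F.1 ⊆ G ∧ e ∉ G},
          X (Sum.inr e) * X (Sum.inl ⟨G.1, G.2.1⟩)) ∈ IW M :=
        Ideal.subset_span ⟨e, F, hF, rfl⟩
      rw [sum_flats_eq M (fun G => F.1 ⊆ G ∧ e ∉ G)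
        (fun G => X (Sum.inr e) * X (Sum.inl G))] at hw
      refine Submodule.mem_sup_right ?_
      simpa only [Finset.filter_congr_decidable] using hw
  rw [hsplit, Finset.sum_insert hFnot] at hS
  have hrest : (∑ G ∈ univ.filter (fun G : {F : Set α // M.IsFlat F} => F.1 ⊂ G.1 ∧ e ∉ G.1),
      Y M e * XL M G) ∈ I2 M + Isq M + IW M := by
    refine Ideal.sum_mem _ fun G hG => ?_
    simp only [mem_filter, mem_univ, true_and] at hG
    exact IH G hG.1 hG.2
  simpa using sub_mem hS hrest

private lemma key [Fintype {F : Set α // M.IsFlat F}] (e : α) :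
    ∀ n : ℕ, ∀ F : {F : Set α // M.IsFlat F}, e ∉ F.1 →
      (univ.filter fun G : {F : Set α // M.IsFlat F} => F.1 ⊂ G.1).card ≤ n →
      Y M e * XL M F ∈ I2 M + Isq M + IW M := by
  intro n
  induction n with
  | zero =>
    intro F he hcard
    refine step M e F he fun G hFG heG => absurd ?_ (by simp : ¬ (G ∈ (∅ : Finset _)))
    rw [← Finset.card_eq_zero.mp (Nat.le_zero.mp hcard)]
    simpa using hFG
  | succ n ih =>
    intro F he hcard
    refine step M e F he fun G hFG heG => ih G heG (Nat.lt_succ_iff.mp (lt_of_lt_of_le ?_ hcard))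
    refine Finset.card_lt_card ⟨fun H hH => ?_, fun hsub => ?_⟩
    · simp only [mem_filter, mem_univ, true_and] at hH ⊢
      exact hFG.trans hH
    · have : G ∈ univ.filter fun H : {F : Set α // M.IsFlat F} => G.1 ⊂ H.1 :=
        hsub (by simpa using hFG)
      simp [ssubset_irrefl] at this

end I2I4Aux

namespace I2I4Aux

private lemma main (M : Matroid α) [Fintype {F : Set α // M.IsFlat F}] :
    I2 M + I4 M = I2 M + Isq M + IW M := by
  refine le_antisymm (sup_le (le_sup_of_le_left le_sup_left) ?_) ?_
  · simp only [I4, Ideal.span_le]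
    rintro p ⟨e, F, heF, rfl⟩
    exact key M e _ F heF le_rfl
  · refine sup_le (sup_le le_sup_left ?_) ?_
    · simp only [Isq, Ideal.span_le]
      rintro p ⟨e, rfl⟩
      have hkey : X (Sum.inr e) ^ 2 =
          X (Sum.inr e) * (Y M e -
            ∑ G ∈ univ.filter (fun G : {F : Set α // M.IsFlat F} => e ∉ G.1), XL M G) +
          ∑ G ∈ univ.filter (fun G : {F : Set α // M.IsFlat F} => e ∉ G.1),
            X (Sum.inr e) * X (Sum.inl G) := by
        rw [← Finset.mul_sum]; simp only [Y, XL]; ring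
      rw [SetLike.mem_coe, hkey]
      refine add_mem (Submodule.mem_sup_left (Ideal.mul_mem_left _ _ (gen2_mem M e)))
        (Submodule.mem_sup_right (Ideal.sum_mem _ fun G hG => ?_))
      simp only [mem_filter, mem_univ, true_and] at hG
      exact Ideal.subset_span ⟨e, G, hG, rfl⟩
    · simp only [IW, Ideal.span_le]
      rintro p ⟨e, F, hF, rfl⟩
      rw [SetLike.mem_coe, sum_flats_eq M (fun G => F.1 ⊆ G ∧ e ∉ G)
        (fun G => X (Sum.inr e) * X (Sum.inl G))]
      refine Submodule.mem_sup_right (Ideal.sum_mem _ fun G hG => ?_)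
      simp only [mem_filter, mem_univ, true_and] at hG
      exact Ideal.subset_span ⟨e, G, hG.2, rfl⟩

end I2I4Aux

/-- In `T = ℤ[x_F : F a flat of M] ⊗ ℤ[y_e : e ∈ E]`, for a loopless matroid `M` on ground
set `E = α`:  with `I₂ = ⟨y_e − Σ_{F ∌ e} x_F⟩`, `I₄^aug = ⟨y_e x_F : e ∉ F⟩`,
`w_{e,F} = Σ_{F ⊆ G, e ∉ G} y_e x_G`, one has
`I₂ + I₄^aug = I₂ + ⟨y_e² : e⟩ + ⟨w_{e,F} : e, F ≠ ∅⟩`. -/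
theorem I2_add_I4aug_eq (M : Matroid α) (hground : M.E = Set.univ)
    (hloopless : M.closure ∅ = ∅) :
    (Ideal.span {p : MvPolynomial ({F : Set α // M.IsFlat F} ⊕ α) ℤ |
        ∃ e : α, p = X (Sum.inr e) -
          ∑ᶠ F : {F : Set α // M.IsFlat F ∧ e ∉ F}, X (Sum.inl ⟨F.1, F.2.1⟩)} +
      Ideal.span {p | ∃ (e : α) (F : {F : Set α // M.IsFlat F}),
        e ∉ F.1 ∧ p = X (Sum.inr e) * X (Sum.inl F)}) =
    (Ideal.span {p : MvPolynomial ({F : Set α // M.IsFlat F} ⊕ α) ℤ |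
        ∃ e : α, p = X (Sum.inr e) -
          ∑ᶠ F : {F : Set α // M.IsFlat F ∧ e ∉ F}, X (Sum.inl ⟨F.1, F.2.1⟩)} +
      Ideal.span {p | ∃ e : α, p = X (Sum.inr e) ^ 2} +
      Ideal.span {p | ∃ (e : α) (F : {F : Set α // M.IsFlat F}), F.1 ≠ ∅ ∧
        p = ∑ᶠ G : {G : Set α // M.IsFlat G ∧ F.1 ⊆ G ∧ e ∉ G},
          X (Sum.inr e) * X (Sum.inl ⟨G.1, G.2.1⟩)}) := by
  haveI := Fintype.ofFinite {F : Set α // M.IsFlat F}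
  exact I2I4Aux.main M
end

section
/- Let n ≥ 3 and let m = (m_S) be a tuple of natural numbers indexed by subsets S ⊆ [n−1] with |S| ≥ 3. Define m̃ indexed by nonempty flats of the braid matroid B_{n−1} (partitions of [n−1]) by m̃_{F_S} = m_S and m̃_F = 0 for flats not of the form F_S. Then m satisfies the Cerberus condition if and only if m̃ satisfies the dragon Hall–Rado condition for B_{n−1}. -/
open Finset

/-- For `S ⊆ ℕ`, the partition of `[n-1] = {1,…,n-1}` whose only (possibly) non-singleton
block is `S ∩ [n-1]`, as a setoid on `{i // i ∈ Icc 1 (n-1)}`. -/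
def braidFlat (n : ℕ) (S : Finset ℕ) : Setoid {i : ℕ // i ∈ Icc 1 (n - 1)} :=
  ⟨fun x y => x = y ∨ (x.1 ∈ S ∧ y.1 ∈ S),
    ⟨fun _ => Or.inl rfl, by rintro x y (rfl | h) <;> tauto,
      by rintro x y z (rfl | h) (rfl | h') <;> tauto⟩⟩

/-- The rank of a partition `π` of `[n-1]` in the partition lattice (the lattice of flats
of the braid matroid `B_{n-1}`): `n - 1` minus the number of blocks. -/
noncomputable def partitionRank (n : ℕ) (π : Setoid {i : ℕ // i ∈ Icc 1 (n - 1)}) : ℕ :=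
  (n - 1) - π.classes.ncard

section Aux

lemma braidFlat_rel {n : ℕ} {S : Finset ℕ} {x y : {i : ℕ // i ∈ Icc 1 (n - 1)}} :
    braidFlat n S x y ↔ x = y ∨ (x.1 ∈ S ∧ y.1 ∈ S) := Iff.rfl

lemma braidFlat_le {n : ℕ} {S T : Finset ℕ} (h : S ⊆ T) :
    braidFlat n S ≤ braidFlat n T := by
  rw [Setoid.le_def]
  rintro x y (rfl | ⟨hx, hy⟩)
  · exact (braidFlat n T).refl x
  · exact Or.inr ⟨h hx, h hy⟩

lemma braidFlat_inj {n : ℕ} {S T : Finset ℕ} (hS : S ⊆ Icc 1 (n - 1))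
    (hT : T ⊆ Icc 1 (n - 1)) (hS2 : 2 ≤ S.card) (hT2 : 2 ≤ T.card)
    (h : braidFlat n S = braidFlat n T) : S = T := by
  have key : ∀ (A B : Finset ℕ), A ⊆ Icc 1 (n - 1) → 2 ≤ A.card →
      braidFlat n A = braidFlat n B → A ⊆ B := by
    intro A B hA hA2 hAB x hx
    obtain ⟨y, hy, hyx⟩ := Finset.exists_mem_ne (s := A) (by omega) x
    have hrel : braidFlat n A ⟨x, hA hx⟩ ⟨y, hA hy⟩ := Or.inr ⟨hx, hy⟩
    rw [hAB] at hrel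
    rcases hrel with heq | ⟨hx', _⟩
    · exact absurd (congrArg Subtype.val heq).symm hyx
    · exact hx'
  exact le_antisymm (key S T hS hS2 h) (key T S hT hT2 h.symm)

lemma finsum_mem_mono {α : Type*} {f g : α → ℕ} (h : ∀ a, f a ≤ g a)
    (hg : (Function.support g).Finite) (A : Set α) :
    ∑ᶠ a ∈ A, f a ≤ ∑ᶠ a ∈ A, g a := by
  classical
  have hfg : Function.support f ⊆ Function.support g := by
    intro x hx h0
    exact hx (Nat.le_zero.mp (h0 ▸ h x))
  set t : Finset α := hg.toFinset.filter (· ∈ A) with ht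
  have hf' : A ∩ Function.support f = ↑t ∩ Function.support f := by
    ext x
    simp only [ht, Set.mem_inter_iff, Finset.coe_filter, Set.Finite.mem_toFinset,
      Set.mem_setOf_eq]
    exact ⟨fun ⟨h1, h2⟩ => ⟨⟨hfg h2, h1⟩, h2⟩, fun ⟨⟨_, h1⟩, h2⟩ => ⟨h1, h2⟩⟩
  have hg' : A ∩ Function.support g = ↑t ∩ Function.support g := by
    ext x
    simp only [ht, Set.mem_inter_iff, Finset.coe_filter, Set.Finite.mem_toFinset,
      Set.mem_setOf_eq]
    tauto
  rw [finsum_mem_eq_sum_of_inter_support_eq f hf',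
    finsum_mem_eq_sum_of_inter_support_eq g hg']
  exact Finset.sum_le_sum fun i _ => h i

lemma exists_of_finsum_mem_ne_zero {α : Type*} {g : α → ℕ} {A : Set α}
    (h : ∑ᶠ a ∈ A, g a ≠ 0) : ∃ a ∈ A, g a ≠ 0 := by
  by_contra hc
  push_neg at hc
  have : A ∩ Function.support g = ∅ := by
    ext x
    simp only [Set.mem_inter_iff, Function.mem_support, Set.mem_empty_iff_false, iff_false,
      not_and]
    intro hA hgx
    exact hgx (hc x hA)
  rw [← finsum_mem_inter_support, this, finsum_mem_empty] at h
  exact h rfl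

/-- The fiber of `braidFlat n S₀` intersected with the support of `g` is `{S₀}`. -/
lemma fiber_inter {n : ℕ} (g : Finset ℕ → ℕ)
    (hg : ∀ S, g S ≠ 0 → 3 ≤ S.card ∧ S ⊆ Icc 1 (n - 1)) {S₀ : Finset ℕ}
    (h₀ : g S₀ ≠ 0) :
    {S : Finset ℕ | 3 ≤ S.card ∧ braidFlat n S = braidFlat n S₀} ∩ Function.support g
      = {S₀} := by
  obtain ⟨hc₀, hsub₀⟩ := hg S₀ h₀
  ext S
  simp only [Set.mem_inter_iff, Set.mem_setOf_eq, Function.mem_support, Set.mem_singleton_iff]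
  constructor
  · rintro ⟨⟨hc, hflat⟩, hS⟩
    obtain ⟨_, hsub⟩ := hg S hS
    exact braidFlat_inj hsub hsub₀ (by omega) (by omega) hflat
  · rintro rfl
    exact ⟨⟨hc₀, rfl⟩, h₀⟩

lemma finsum_fiber_eq {n : ℕ} (g : Finset ℕ → ℕ)
    (hg : ∀ S, g S ≠ 0 → 3 ≤ S.card ∧ S ⊆ Icc 1 (n - 1)) {S₀ : Finset ℕ}
    (h₀ : g S₀ ≠ 0) :
    ∑ᶠ S ∈ {S : Finset ℕ | 3 ≤ S.card ∧ braidFlat n S = braidFlat n S₀}, g S = g S₀ := by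
  rw [← finsum_mem_inter_support, fiber_inter g hg h₀, finsum_mem_singleton]

/-- The key rank/component computation for a join of braid flats. -/
lemma rank_aux (n : ℕ) (hn : 3 ≤ n) (𝒮 : Finset (Finset ℕ))
    (hS : ∀ S ∈ 𝒮, 3 ≤ S.card ∧ S ⊆ Icc 1 (n - 1)) (hne : 𝒮.Nonempty) :
    ∃ c : ℕ, 1 ≤ c ∧ c ≤ (𝒮.biUnion id).card ∧
      partitionRank n (sSup (braidFlat n '' ↑𝒮)) = (𝒮.biUnion id).card - c ∧
      (∀ w : Finset ℕ → ℕ,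
        (∀ T : Finset (Finset ℕ), T ⊆ 𝒮 → T.Nonempty →
          2 + ∑ S ∈ T, w S ≤ (T.biUnion id).card) →
        2 * c + ∑ S ∈ 𝒮, w S ≤ (𝒮.biUnion id).card) := by
  classical
  set B : Finset ℕ := 𝒮.biUnion id with hBdef
  have hB : B ⊆ Icc 1 (n - 1) := by
    intro b hb
    obtain ⟨S, hS', hb'⟩ := Finset.mem_biUnion.mp hb
    exact (hS S hS').2 hb'
  set σ : Setoid {i : ℕ // i ∈ Icc 1 (n - 1)} := sSup (braidFlat n '' ↑𝒮) with hσdef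
  have hup : ∀ x y : {i : ℕ // i ∈ Icc 1 (n - 1)}, σ x y → x = y ∨ (x.1 ∈ B ∧ y.1 ∈ B) := by
    have hle : σ ≤ braidFlat n B := by
      apply sSup_le
      rintro π ⟨S, hS', rfl⟩
      exact braidFlat_le (Finset.subset_biUnion_of_mem id hS')
    intro x y h
    exact (Setoid.le_def.mp hle) h
  have hdn : ∀ S ∈ 𝒮, ∀ x y : {i : ℕ // i ∈ Icc 1 (n - 1)},
      x.1 ∈ S → y.1 ∈ S → σ x y := by
    intro S h x y hx hy
    have hle : braidFlat n S ≤ σ := le_sSup ⟨S, h, rfl⟩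
    exact (Setoid.le_def.mp hle) (Or.inr ⟨hx, hy⟩)
  set U : Finset {i : ℕ // i ∈ Icc 1 (n - 1)} := Finset.univ.filter (fun x => x.1 ∈ B)
    with hUdef
  set Q : Finset (Quotient σ) := U.image (Quotient.mk σ) with hQdef
  set c : ℕ := Q.card with hcdef
  have hVcard : (Finset.univ : Finset {i : ℕ // i ∈ Icc 1 (n - 1)}).card = n - 1 := by
    rw [Finset.card_univ, Fintype.card_coe, Nat.card_Icc]; omega
  have hUcard : U.card = B.card := by
    have himg : U.image Subtype.val = B := by
      ext b
      simp only [hUdef, Finset.mem_image, Finset.mem_filter, Finset.mem_univ, true_and]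
      constructor
      · rintro ⟨x, hx, rfl⟩; exact hx
      · intro hb; exact ⟨⟨b, hB hb⟩, hb, rfl⟩
    rw [← himg, Finset.card_image_of_injective _ Subtype.val_injective]
  have hBn : B.card ≤ n - 1 := by
    have := Finset.card_le_card hB
    rwa [Nat.card_Icc, show n - 1 + 1 - 1 = n - 1 by omega] at this
  -- the quotient has c + ((n-1) - B.card) elements
  have hquot : (Finset.univ : Finset (Quotient σ)).card = c + ((n - 1) - B.card) := by
    set W : Finset {i : ℕ // i ∈ Icc 1 (n - 1)} := Finset.univ.filter (fun x => x.1 ∉ B)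
      with hWdef
    have hWcard : W.card = (n - 1) - B.card := by
      have h1 : W = Finset.univ \ U := Finset.filter_not _ _
      rw [h1, Finset.card_sdiff_of_subset (Finset.subset_univ U), hVcard, hUcard]
    have huniv : (Finset.univ : Finset (Quotient σ)) = Q ∪ W.image (Quotient.mk σ) := by
      ext q
      simp only [Finset.mem_univ, true_iff, Finset.mem_union]
      obtain ⟨x, rfl⟩ := Quotient.exists_rep q
      by_cases hx : x.1 ∈ B
      · left
        exact Finset.mem_image.mpr ⟨x, by simp [hUdef, hx], rfl⟩
      · right
        exact Finset.mem_image.mpr ⟨x, by simp [hWdef, hx], rfl⟩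
    have hdisj : Disjoint Q (W.image (Quotient.mk σ)) := by
      rw [Finset.disjoint_left]
      intro q hq hq'
      obtain ⟨x, hx, rfl⟩ := Finset.mem_image.mp hq
      obtain ⟨y, hy, hxy⟩ := Finset.mem_image.mp hq'
      simp only [hUdef, Finset.mem_filter, Finset.mem_univ, true_and] at hx
      simp only [hWdef, Finset.mem_filter, Finset.mem_univ, true_and] at hy
      have hrel : σ y x := Quotient.eq.mp hxy
      rcases hup y x hrel with rfl | ⟨hy', _⟩
      · exact hy hx
      · exact hy hy'
    have hWinj : Set.InjOn (Quotient.mk σ) ↑W := by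
      intro x hx y hy hxy
      simp only [hWdef, Finset.coe_filter, Set.mem_setOf_eq, Finset.mem_univ, true_and] at hx hy
      have hrel : σ x y := Quotient.eq.mp hxy
      rcases hup x y hrel with h | ⟨hx', _⟩
      · exact h
      · exact absurd hx' hx
    calc (Finset.univ : Finset (Quotient σ)).card
        = Q.card + (W.image (Quotient.mk σ)).card := by
          rw [huniv, Finset.card_union_of_disjoint hdisj]
      _ = c + ((n - 1) - B.card) := by
          rw [Finset.card_image_of_injOn hWinj, hWcard]
  have hclasses : σ.classes.ncard = (Finset.univ : Finset (Quotient σ)).card := by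
    rw [Finset.card_univ, ← Nat.card_coe_set_eq, ← Nat.card_eq_fintype_card]
    exact (Nat.card_congr (Setoid.quotientEquivClasses σ)).symm
  have hc1 : 1 ≤ c := by
    obtain ⟨S, hSmem⟩ := hne
    have hSpos : 0 < S.card := by have := (hS S hSmem).1; omega
    obtain ⟨x, hx⟩ := Finset.card_pos.mp hSpos
    have hxB : x ∈ B := Finset.mem_biUnion.mpr ⟨S, hSmem, hx⟩
    have : Quotient.mk σ ⟨x, hB hxB⟩ ∈ Q :=
      Finset.mem_image.mpr ⟨⟨x, hB hxB⟩, by simp [hUdef, hxB], rfl⟩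
    exact Finset.card_pos.mpr ⟨_, this⟩
  have hcB : c ≤ B.card := le_trans (Finset.card_image_le) (le_of_eq hUcard)
  refine ⟨c, hc1, hcB, ?_, ?_⟩
  · rw [partitionRank, hclasses, hquot]
    omega
  · -- component decomposition
    intro w hw
    set Tq : Quotient σ → Finset (Finset ℕ) :=
      fun q => 𝒮.filter (fun S => ∀ x : {i : ℕ // i ∈ Icc 1 (n - 1)},
        x.1 ∈ S → Quotient.mk σ x = q) with hTqdef
    have hclassS : ∀ S ∈ 𝒮, ∀ (x : {i : ℕ // i ∈ Icc 1 (n - 1)}), x.1 ∈ S →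
        S ∈ Tq (Quotient.mk σ x) := by
      intro S hSm x hx
      refine Finset.mem_filter.mpr ⟨hSm, fun y hy => ?_⟩
      exact Quotient.sound (hdn S hSm y x hy hx)
    have hTqne : ∀ q ∈ Q, (Tq q).Nonempty := by
      intro q hq
      obtain ⟨x, hxU, rfl⟩ := Finset.mem_image.mp hq
      simp only [hUdef, Finset.mem_filter, Finset.mem_univ, true_and] at hxU
      obtain ⟨S, hSm, hxS⟩ := Finset.mem_biUnion.mp hxU
      exact ⟨S, hclassS S hSm x hxS⟩
    have h𝒮eq : 𝒮 = Q.biUnion Tq := by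
      ext S
      constructor
      · intro hSm
        have hSpos : 0 < S.card := by have := (hS S hSm).1; omega
        obtain ⟨x, hx⟩ := Finset.card_pos.mp hSpos
        have hxB : x ∈ B := Finset.mem_biUnion.mpr ⟨S, hSm, hx⟩
        refine Finset.mem_biUnion.mpr ⟨Quotient.mk σ ⟨x, hB hxB⟩, ?_, ?_⟩
        · exact Finset.mem_image.mpr ⟨⟨x, hB hxB⟩, by simp [hUdef, hxB], rfl⟩
        · exact hclassS S hSm ⟨x, hB hxB⟩ hx
      · intro h
        obtain ⟨q, _, hSq⟩ := Finset.mem_biUnion.mp h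
        exact (Finset.mem_filter.mp hSq).1
    have hTqdisj : ∀ q ∈ Q, ∀ q' ∈ Q, q ≠ q' → Disjoint (Tq q) (Tq q') := by
      intro q _ q' _ hqq'
      rw [Finset.disjoint_left]
      intro S hSq hSq'
      obtain ⟨hSm, hq⟩ := Finset.mem_filter.mp hSq
      obtain ⟨_, hq'⟩ := Finset.mem_filter.mp hSq'
      have hSpos : 0 < S.card := by have := (hS S hSm).1; omega
      obtain ⟨x, hx⟩ := Finset.card_pos.mp hSpos
      have hxI : x ∈ Icc 1 (n - 1) := (hS S hSm).2 hx
      exact hqq' ((hq ⟨x, hxI⟩ hx).symm.trans (hq' ⟨x, hxI⟩ hx))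
    -- B partitioned by classes
    set Bq : Quotient σ → Finset {i : ℕ // i ∈ Icc 1 (n - 1)} :=
      fun q => U.filter (fun x => Quotient.mk σ x = q) with hBqdef
    have hUcard' : U.card = ∑ q ∈ Q, (Bq q).card := by
      have hUeq : U = Q.biUnion Bq := by
        ext x
        simp only [hBqdef, Finset.mem_biUnion, Finset.mem_filter]
        constructor
        · intro hx
          exact ⟨Quotient.mk σ x, Finset.mem_image.mpr ⟨x, hx, rfl⟩, hx, rfl⟩
        · rintro ⟨q, _, hx, _⟩; exact hx
      rw [hUeq, Finset.card_biUnion]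
      intro q _ q' _ hqq'
      rw [Function.onFun, Finset.disjoint_left]
      rintro x hx hx'
      obtain ⟨_, rfl⟩ := Finset.mem_filter.mp hx
      exact hqq' (Finset.mem_filter.mp hx').2
    -- per-class bound
    have hkey : ∀ q ∈ Q, 2 + ∑ S ∈ Tq q, w S ≤ (Bq q).card := by
      intro q hq
      have h1 : 2 + ∑ S ∈ Tq q, w S ≤ ((Tq q).biUnion id).card :=
        hw (Tq q) (Finset.filter_subset _ _) (hTqne q hq)
      refine le_trans h1 ?_
      -- lift (Tq q).biUnion id into Bq q
      have hsub : (Tq q).biUnion id ⊆ Icc 1 (n - 1) := by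
        intro b hb
        obtain ⟨S, hSm, hb'⟩ := Finset.mem_biUnion.mp hb
        exact (hS S (Finset.mem_filter.mp hSm).1).2 hb'
      have h1n : (1 : ℕ) ∈ Icc 1 (n - 1) := by
        rw [Finset.mem_Icc]; omega
      apply Finset.card_le_card_of_injOn
        (fun b => if h : b ∈ Icc 1 (n - 1) then (⟨b, h⟩ : {i : ℕ // i ∈ Icc 1 (n - 1)})
          else ⟨1, h1n⟩)
      · intro b hb
        obtain ⟨S, hSm, hb'⟩ := Finset.mem_biUnion.mp hb
        obtain ⟨hS𝒮, hq'⟩ := Finset.mem_filter.mp hSm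
        have hbI : b ∈ Icc 1 (n - 1) := hsub hb
        simp only [Finset.mem_coe, dif_pos hbI]
        refine Finset.mem_filter.mpr ⟨?_, hq' ⟨b, hbI⟩ hb'⟩
        simp only [hUdef, Finset.mem_filter, Finset.mem_univ, true_and]
        exact Finset.mem_biUnion.mpr ⟨S, hS𝒮, hb'⟩
      · intro a ha b hb hab
        have haI : a ∈ Icc 1 (n - 1) := hsub ha
        have hbI : b ∈ Icc 1 (n - 1) := hsub hb
        simp only [dif_pos haI, dif_pos hbI] at hab
        exact congrArg Subtype.val hab
    calc 2 * c + ∑ S ∈ 𝒮, w S = ∑ q ∈ Q, (2 + ∑ S ∈ Tq q, w S) := by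
          rw [Finset.sum_add_distrib, Finset.sum_const, smul_eq_mul, mul_comm]
          congr 1
          rw [h𝒮eq]
          exact Finset.sum_biUnion hTqdisj
      _ ≤ ∑ q ∈ Q, (Bq q).card := Finset.sum_le_sum hkey
      _ = B.card := by rw [← hUcard', hUcard]

end Aux

/-- Let `n ≥ 3` and `m = (m_S)` be indexed by subsets `S ⊆ [n-1]` with `|S| ≥ 3`.  Let
`m̃`, indexed by the nonempty flats of the braid matroid `B_{n-1}` (partitions of
`[n-1]`), be given by `m̃_{F_S} = m_S` and `m̃_F = 0` for flats not of the form `F_S`.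
Then `m` satisfies the Cerberus condition iff `m̃` satisfies the dragon Hall–Rado
condition for `B_{n-1}`. -/
theorem cerberus_iff_dragonHallRado (n : ℕ) (hn : 3 ≤ n) (m : Finset ℕ → ℕ)
    (hsupp : ∀ S, m S ≠ 0 → 3 ≤ S.card ∧ S ⊆ Icc 1 (n - 1)) :
    -- the Cerberus condition for `m`
    (∀ m' : Finset ℕ → ℕ, (∀ S, m' S ≤ m S) →
        (∑ᶠ S, m' S) ≤
          (((Icc 1 (n - 1)).powerset.filter (fun S => 0 < m' S)).biUnion id ∪ {n}).card - 3) ↔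
    -- the dragon Hall–Rado condition for `m̃`
    (∀ mt : Setoid {i : ℕ // i ∈ Icc 1 (n - 1)} → ℕ,
        mt ≠ 0 →
        (∀ π, mt π ≤ ∑ᶠ S ∈ {S : Finset ℕ | 3 ≤ S.card ∧ braidFlat n S = π}, m S) →
        (∑ᶠ π, mt π) < partitionRank n (sSup {π | 0 < mt π})) := by
  classical
  have hmfin : (Function.support m).Finite := by
    apply Set.Finite.subset (Finset.finite_toSet ((Icc 1 (n - 1)).powerset))
    intro S hS
    exact Finset.mem_coe.mpr (Finset.mem_powerset.mpr (hsupp S hS).2)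
  constructor
  · -- Cerberus implies dragon Hall–Rado
    intro hC mt hmt0 hmtle
    set Sup' : Finset (Finset ℕ) :=
      (Icc 1 (n - 1)).powerset.filter (fun S => 0 < m S ∧ 0 < mt (braidFlat n S)) with hSup'
    have hmem : ∀ S ∈ Sup', 3 ≤ S.card ∧ S ⊆ Icc 1 (n - 1) := by
      intro S hSm
      have h2 := (Finset.mem_filter.mp hSm).2.1
      exact hsupp S (by omega)
    have hsuppset : {π | 0 < mt π} = braidFlat n '' ↑Sup' := by
      ext π
      simp only [Set.mem_setOf_eq, Set.mem_image, Finset.mem_coe]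
      constructor
      · intro hπ
        have h2 : ∑ᶠ S ∈ {S : Finset ℕ | 3 ≤ S.card ∧ braidFlat n S = π}, m S ≠ 0 := by
          have := hmtle π; omega
        obtain ⟨S, hSA, hmS⟩ := exists_of_finsum_mem_ne_zero h2
        refine ⟨S, ?_, hSA.2⟩
        refine Finset.mem_filter.mpr ⟨Finset.mem_powerset.mpr (hsupp S hmS).2, by omega, ?_⟩
        rw [hSA.2]
        exact hπ
      · rintro ⟨S, hSm, rfl⟩
        exact (Finset.mem_filter.mp hSm).2.2
    set m' : Finset ℕ → ℕ := fun S => if S ∈ Sup' then mt (braidFlat n S) else 0 with hm'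
    have hm'val : ∀ S ∈ Sup', m' S = mt (braidFlat n S) := by
      intro S hSm; rw [hm']; simp only [if_pos hSm]
    have hm'le : ∀ S, m' S ≤ m S := by
      intro S
      by_cases hSm : S ∈ Sup'
      · rw [hm'val S hSm]
        have h2 := (Finset.mem_filter.mp hSm).2.1
        have h3 := hmtle (braidFlat n S)
        rwa [finsum_fiber_eq m hsupp (by omega)] at h3
      · rw [hm']; simp only [if_neg hSm]; exact Nat.zero_le _
    have hSup'ne : Sup'.Nonempty := by
      obtain ⟨π, hπ⟩ := Function.ne_iff.mp hmt0
      have hπ' : π ∈ {π | 0 < mt π} := by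
        simp only [Set.mem_setOf_eq]
        exact Nat.pos_of_ne_zero (by simpa using hπ)
      rw [hsuppset] at hπ'
      obtain ⟨S, hSm, _⟩ := hπ'
      exact ⟨S, Finset.mem_coe.mp hSm⟩
    have hinj : Set.InjOn (braidFlat n) ↑Sup' := by
      intro S hSm T hTm h
      have h1 := hmem S (Finset.mem_coe.mp hSm)
      have h2 := hmem T (Finset.mem_coe.mp hTm)
      exact braidFlat_inj h1.2 h2.2 (by omega) (by omega) h
    have hsum : ∑ᶠ π, mt π = ∑ S ∈ Sup', m' S := by
      have hsub : Function.support mt ⊆ ↑(Sup'.image (braidFlat n)) := by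
        intro π hπ
        rw [Finset.coe_image]
        rw [← hsuppset]
        simp only [Set.mem_setOf_eq]
        exact Nat.pos_of_ne_zero hπ
      rw [finsum_eq_sum_of_support_subset mt hsub,
        Finset.sum_image (fun S hS T hT h => hinj (Finset.mem_coe.mpr hS)
          (Finset.mem_coe.mpr hT) h)]
      exact Finset.sum_congr rfl fun S hSm => (hm'val S hSm).symm
    obtain ⟨c, hc1, hcB, hrank, hcomp⟩ := rank_aux n hn Sup' hmem hSup'ne
    have hmain : 2 * c + ∑ S ∈ Sup', m' S ≤ (Sup'.biUnion id).card := by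
      apply hcomp
      intro T hTsub hTne
      set m'' : Finset ℕ → ℕ := fun S => if S ∈ T then m' S else 0 with hm''
      have h1 : ∀ S, m'' S ≤ m S := by
        intro S
        rw [hm'']
        by_cases h : S ∈ T
        · simp only [if_pos h]; exact hm'le S
        · simp only [if_neg h]; exact Nat.zero_le _
      have hC' := hC m'' h1
      have hfilter : (Icc 1 (n - 1)).powerset.filter (fun S => 0 < m'' S) = T := by
        ext S
        simp only [Finset.mem_filter, Finset.mem_powerset]
        constructor
        · rintro ⟨_, hpos⟩
          by_contra h
          rw [hm''] at hpos
          simp only [if_neg h] at hpos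
          omega
        · intro hSm
          have hS' := hTsub hSm
          refine ⟨(hmem S hS').2, ?_⟩
          rw [hm'']
          simp only [if_pos hSm]
          rw [hm'val S hS']
          exact (Finset.mem_filter.mp hS').2.2
      have hsum'' : ∑ᶠ S, m'' S = ∑ S ∈ T, m' S := by
        have hsub : Function.support m'' ⊆ ↑T := by
          intro S hS
          by_contra h
          apply hS
          rw [hm'']
          simp only [if_neg (fun h' => h (Finset.mem_coe.mpr h'))]
        rw [finsum_eq_sum_of_support_subset m'' hsub]
        refine Finset.sum_congr rfl fun S hSm => ?_
        rw [hm'']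
        simp only [if_pos hSm]
      obtain ⟨S₀, hS₀⟩ := hTne
      have h3 : 3 ≤ (T.biUnion id).card :=
        le_trans (hmem S₀ (hTsub hS₀)).1
          (Finset.card_le_card (Finset.subset_biUnion_of_mem id hS₀))
      have hnmem : n ∉ T.biUnion id := by
        intro h
        obtain ⟨S, hSm, hn'⟩ := Finset.mem_biUnion.mp h
        have := Finset.mem_Icc.mp ((hmem S (hTsub hSm)).2 hn')
        omega
      have hcardU : (T.biUnion id ∪ {n}).card = (T.biUnion id).card + 1 := by
        rw [Finset.card_union_of_disjoint (Finset.disjoint_singleton_right.mpr hnmem),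
          Finset.card_singleton]
      rw [hfilter, hsum'', hcardU] at hC'
      omega
    rw [hsuppset, hrank, hsum]
    omega
  · -- dragon Hall–Rado implies Cerberus
    intro hD m' hm'le
    by_cases h0 : ∀ S, m' S = 0
    · rw [finsum_eq_zero_of_forall_eq_zero h0]
      exact Nat.zero_le _
    push_neg at h0
    obtain ⟨S₀, hS₀⟩ := h0
    have hm'supp : ∀ S, m' S ≠ 0 → 3 ≤ S.card ∧ S ⊆ Icc 1 (n - 1) := by
      intro S h
      refine hsupp S fun h' => h ?_
      have := hm'le S
      omega
    set Sup' : Finset (Finset ℕ) := (Icc 1 (n - 1)).powerset.filter (fun S => 0 < m' S)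
      with hSup'
    have hmemiff : ∀ S, S ∈ Sup' ↔ m' S ≠ 0 := by
      intro S
      rw [hSup', Finset.mem_filter, Finset.mem_powerset]
      constructor
      · rintro ⟨_, h⟩; omega
      · intro h; exact ⟨(hm'supp S h).2, Nat.pos_of_ne_zero h⟩
    have hmem : ∀ S ∈ Sup', 3 ≤ S.card ∧ S ⊆ Icc 1 (n - 1) :=
      fun S hSm => hm'supp S ((hmemiff S).mp hSm)
    have hSup'ne : Sup'.Nonempty := ⟨S₀, (hmemiff S₀).mpr hS₀⟩
    set mt : Setoid {i : ℕ // i ∈ Icc 1 (n - 1)} → ℕ :=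
      fun π => ∑ᶠ S ∈ {S : Finset ℕ | 3 ≤ S.card ∧ braidFlat n S = π}, m' S with hmt
    have hmtle : ∀ π, mt π ≤ ∑ᶠ S ∈ {S : Finset ℕ | 3 ≤ S.card ∧ braidFlat n S = π}, m S :=
      fun π => finsum_mem_mono hm'le hmfin _
    have hfib : ∀ S, m' S ≠ 0 → mt (braidFlat n S) = m' S :=
      fun S h => finsum_fiber_eq m' hm'supp h
    have hmt0 : mt ≠ 0 := by
      intro h
      apply hS₀
      rw [← hfib S₀ hS₀, h]
      rfl
    have hsuppset : {π | 0 < mt π} = braidFlat n '' ↑Sup' := by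
      ext π
      simp only [Set.mem_setOf_eq, Set.mem_image, Finset.mem_coe]
      constructor
      · intro hπ
        obtain ⟨S, hSA, hmS⟩ := exists_of_finsum_mem_ne_zero (g := m')
          (show mt π ≠ 0 by omega)
        exact ⟨S, (hmemiff S).mpr hmS, hSA.2⟩
      · rintro ⟨S, hSm, rfl⟩
        rw [hfib S ((hmemiff S).mp hSm)]
        exact Nat.pos_of_ne_zero ((hmemiff S).mp hSm)
    have hinj : Set.InjOn (braidFlat n) ↑Sup' := by
      intro S hSm T hTm h
      have h1 := hmem S (Finset.mem_coe.mp hSm)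
      have h2 := hmem T (Finset.mem_coe.mp hTm)
      exact braidFlat_inj h1.2 h2.2 (by omega) (by omega) h
    have hsummt : ∑ᶠ π, mt π = ∑ S ∈ Sup', m' S := by
      have hsub : Function.support mt ⊆ ↑(Sup'.image (braidFlat n)) := by
        intro π hπ
        rw [Finset.coe_image, ← hsuppset]
        simp only [Set.mem_setOf_eq]
        exact Nat.pos_of_ne_zero hπ
      rw [finsum_eq_sum_of_support_subset mt hsub,
        Finset.sum_image (fun S hS T hT h => hinj (Finset.mem_coe.mpr hS)
          (Finset.mem_coe.mpr hT) h)]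
      exact Finset.sum_congr rfl fun S hSm => hfib S ((hmemiff S).mp hSm)
    have hsumm' : ∑ᶠ S, m' S = ∑ S ∈ Sup', m' S := by
      refine finsum_eq_sum_of_support_subset m' fun S hS => ?_
      exact Finset.mem_coe.mpr ((hmemiff S).mpr hS)
    obtain ⟨c, hc1, hcB, hrank, -⟩ := rank_aux n hn Sup' hmem hSup'ne
    have hdhr := hD mt hmt0 hmtle
    rw [hsuppset, hrank, hsummt] at hdhr
    have h3 : 3 ≤ (Sup'.biUnion id).card := by
      obtain ⟨S₁, hS₁⟩ := hSup'ne
      exact le_trans (hmem S₁ hS₁).1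
        (Finset.card_le_card (Finset.subset_biUnion_of_mem id hS₁))
    have hnmem : n ∉ Sup'.biUnion id := by
      intro h
      obtain ⟨S, hSm, hn'⟩ := Finset.mem_biUnion.mp h
      have := Finset.mem_Icc.mp ((hmem S hSm).2 hn')
      omega
    have hcardU : (Sup'.biUnion id ∪ {n}).card = (Sup'.biUnion id).card + 1 := by
      rw [Finset.card_union_of_disjoint (Finset.disjoint_singleton_right.mpr hnmem),
        Finset.card_singleton]
    rw [hsumm', hcardU]
    omega
end
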